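/- Let G : ℝ^d → ℝ^n be differentiable with derivative DG, let z* ∈ ℝ^d, and define F(z) = ‖G(z*) − G(z)‖². If G is (α, γ)-strongly smooth, i.e. ⟨G(z) − G(z'), DG(z)(z − z')⟩ ≥ α‖z − z'‖² − γ for all z, z', then for every z ∈ ℝ^d, ⟨z − z*, ∇F(z)⟩ ≥ 2α‖z − z*‖² − 2γ; i.e., the loss F with identity measurement map is (2α, 2γ)-dissipative around z*. -/

import Mathlib

open scoped RealInnerProductSpace

/-- Dissipativity with identity measurement map: if `G` is `(α, γ)`-strongly smooth,
then `F(z) = ‖G(z*) − G(z)‖²` is `(2α, 2γ)`-dissipative around `z*`. -/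
theorem identity_loss_dissipative
    {d n : ℕ}
    (G : EuclideanSpace ℝ (Fin d) → EuclideanSpace ℝ (Fin n))
    (DG : EuclideanSpace ℝ (Fin d) →
      (EuclideanSpace ℝ (Fin d) →L[ℝ] EuclideanSpace ℝ (Fin n)))
    (hdiff : ∀ z, HasFDerivAt G (DG z) z)
    (zstar : EuclideanSpace ℝ (Fin d))
    (α γ : ℝ)
    (hsmooth : ∀ z z' : EuclideanSpace ℝ (Fin d),
      ⟪G z - G z', DG z (z - z')⟫ ≥ α * ‖z - z'‖ ^ 2 - γ)
    (F : EuclideanSpace ℝ (Fin d) → ℝ)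
    (hF : ∀ w, F w = ‖G zstar - G w‖ ^ 2) :
    ∀ z : EuclideanSpace ℝ (Fin d),
      ⟪z - zstar, gradient F z⟫ ≥ 2 * α * ‖z - zstar‖ ^ 2 - 2 * γ := by
  intro z
  -- gradient of F at z is -2 • adjoint (DG z) (G zstar - G z)
  set g : EuclideanSpace ℝ (Fin d) := (-2 : ℝ) • ((DG z).adjoint (G zstar - G z)) with hg
  have hgrad : HasGradientAt F g z := by
    rw [hasGradientAt_iff_hasFDerivAt]
    have hfd : HasFDerivAt (fun w => G zstar - G w) (-(DG z)) z := by
      have h := (hasFDerivAt_const (G zstar) z).sub (hdiff z)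
      rw [zero_sub] at h
      exact h
    have h1 : HasFDerivAt (fun w => ⟪(fun w => G zstar - G w) w, (fun w => G zstar - G w) w⟫)
        ((fderivInnerCLM ℝ (G zstar - G z, G zstar - G z)).comp ((-(DG z)).prod (-(DG z)))) z :=
      hfd.inner ℝ hfd
    have hFeq : F = fun w => ⟪G zstar - G w, G zstar - G w⟫ := by
      funext w; rw [hF w, ← real_inner_self_eq_norm_sq]
    rw [hFeq]
    refine h1.congr_fderiv ?_
    ext v
    simp only [LinearIsometryEquiv.coe_coe, InnerProductSpace.toDual_apply_apply,
      ContinuousLinearMap.coe_comp', Function.comp_apply, ContinuousLinearMap.prod_apply,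
      ContinuousLinearMap.neg_apply, fderivInnerCLM_apply, hg]
    rw [real_inner_smul_left, ContinuousLinearMap.adjoint_inner_left,
      inner_neg_right, inner_neg_left, real_inner_comm ((DG z) v)]
    ring
  rw [hgrad.gradient]
  have key : ⟪z - zstar, g⟫ = 2 * ⟪G z - G zstar, DG z (z - zstar)⟫ := by
    rw [hg]
    rw [real_inner_smul_right, real_inner_comm, ContinuousLinearMap.adjoint_inner_left]
    have : G zstar - G z = -(G z - G zstar) := by abel
    rw [this, inner_neg_left]
    ring
  rw [key]
  have := hsmooth z zstar
  linarith
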